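/- Let K be a field of characteristic p > 0 such that the Artin–Schreier map ℘(x) = x^p - x is surjective on K. Then K has no Galois extension of degree p. -/

import Mathlib

open Module

/-- Let `K` be a field of characteristic `p > 0` on which the Artin–Schreier map
`℘(x) = x^p - x` is surjective. Then `K` has no Galois extension of degree `p`. -/
theorem no_degree_p_galois_extension_of_artin_schreier_surjective
    {K : Type*} [Field K] (p : ℕ) [Fact p.Prime] [CharP K p]
    (hAS : Function.Surjective (fun x : K => x ^ p - x)) :
    ∀ (L : Type*) [Field L] [Algebra K L] [IsGalois K L], finrank K L ≠ p := by
  intro L _ _ _ hdim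
  have hp : p.Prime := Fact.out
  haveI : FiniteDimensional K L := FiniteDimensional.of_finrank_pos (hdim ▸ hp.pos)
  haveI : CharP L p := charP_of_injective_algebraMap (algebraMap K L).injective p
  -- the Galois group has order `p`, hence is cyclic; pick a generator `σ`
  have hcard : Fintype.card (L ≃ₐ[K] L) = p := by
    rw [← Nat.card_eq_fintype_card, IsGalois.card_aut_eq_finrank, hdim]
  haveI : IsCyclic (L ≃ₐ[K] L) := isCyclic_of_prime_card (Nat.card_eq_fintype_card.trans hcard)
  obtain ⟨σ, hσ⟩ := IsCyclic.exists_generator (α := (L ≃ₐ[K] L))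
  have hord : orderOf σ = p := by
    rw [orderOf_eq_card_of_forall_mem_zpowers hσ, Nat.card_eq_fintype_card, hcard]
  have hσp : σ ^ p = 1 := by rw [← hord]; exact pow_orderOf_eq_one σ
  have hσne : σ ≠ 1 := by
    intro h
    have := hord
    rw [h, orderOf_one] at this
    exact hp.one_lt.ne this
  -- anything fixed by `σ` is fixed by the whole Galois group, hence lies in `K`
  have hfix : ∀ x : L, σ x = x → ∃ k : K, algebraMap K L k = x := by
    intro x hx
    have hall : ∀ g : L ≃ₐ[K] L, g x = x := by
      intro g
      have hpowfix : ∀ n : ℕ, (σ ^ n) x = x := by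
        intro n
        induction n with
        | zero => rfl
        | succ n ih => rw [pow_succ, AlgEquiv.mul_apply, hx, ih]
      obtain ⟨n, hn⟩ := (mem_powers_iff_mem_zpowers).2 (hσ g)
      rw [← hn]
      exact hpowfix n
    have hmem : x ∈ IntermediateField.fixedField
        (IntermediateField.fixingSubgroup (⊥ : IntermediateField K L)) := by
      intro g
      exact hall g
    rw [IsGalois.fixedField_fixingSubgroup (⊥ : IntermediateField K L),
      IntermediateField.mem_bot] at hmem
    exact hmem
  -- the linear map `D = σ - 1`
  set S : L →ₗ[K] L := σ.toLinearMap with hS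
  set D : L →ₗ[K] L := S - 1 with hD
  have hDapp : ∀ x : L, D x = σ x - x := fun x => rfl
  -- `D ^ p = 0`
  haveI : CharP (Module.End K L) p :=
    charP_of_injective_algebraMap (algebraMap K (Module.End K L)).injective p
  have hSpow : ∀ n : ℕ, S ^ n = (σ ^ n).toLinearMap := by
    intro n
    induction n with
    | zero => rfl
    | succ n ih =>
      ext x
      rw [pow_succ, pow_succ]
      simp only [Module.End.mul_apply, ih, AlgEquiv.mul_apply]
      rfl
  have hDp : D ^ p = 0 := by
    have hcomm : Commute S (1 : L →ₗ[K] L) := Commute.one_right S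
    rw [hD, sub_pow_char_of_commute p hcomm, one_pow, hSpow, hσp]
    simp
  -- `D ≠ 0`
  have hDne : D ≠ 0 := by
    intro h
    apply hσne
    ext x
    have := congrArg (fun f : L →ₗ[K] L => f x) h
    simp [hDapp] at this
    simpa [sub_eq_zero] using this
  -- find `x` with `D (D x) = 0` but `D x ≠ 0`
  have hker : ∃ x : L, D (D x) = 0 ∧ D x ≠ 0 := by
    by_contra h
    push_neg at h
    have hstep : ∀ x : L, D (D x) = 0 → D x = 0 := by
      intro x hx
      by_contra hne
      exact hne (h x hx)
    have hkey : ∀ n : ℕ, ∀ x : L, (D ^ n) x = 0 → D x = 0 := by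
      intro n
      induction n with
      | zero => intro x hx; simp at hx; simp [hx]
      | succ n ih =>
        intro x hx
        rw [pow_succ] at hx
        have : (D ^ n) (D x) = 0 := by
          simpa [Module.End.mul_apply] using hx
        exact hstep x (ih (D x) this)
    apply hDne
    ext x
    have : (D ^ p) x = 0 := by rw [hDp]; rfl
    simpa using hkey p x this
  obtain ⟨x, hx2, hx1⟩ := hker
  -- `D x` is fixed by `σ`, so it equals `algebraMap K L c` with `c ≠ 0`
  obtain ⟨c, hc⟩ := hfix (D x) (sub_eq_zero.mp (by rw [← hDapp]; exact hx2))
  have hcne : c ≠ 0 := by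
    intro h
    apply hx1
    rw [← hc, h, map_zero]
  -- rescale to get `β` with `σ β = β + 1`
  set β : L := (algebraMap K L c)⁻¹ * x with hβ
  have halgne : algebraMap K L c ≠ 0 := fun h => hcne ((algebraMap K L).injective (by simpa using h))
  have hσβ : σ β = β + 1 := by
    have h1 : σ x - x = algebraMap K L c := hc.symm ▸ (hDapp x)
    have hσx : σ x = x + algebraMap K L c := by rw [← h1]; ring
    rw [hβ, map_mul, hσx]
    rw [show σ ((algebraMap K L c)⁻¹) = (algebraMap K L c)⁻¹ by
      rw [map_inv₀, AlgEquiv.commutes]]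
    field_simp
  -- `a = β ^ p - β` is fixed by `σ`, hence `a = algebraMap K L k`
  have hσa : σ (β ^ p - β) = β ^ p - β := by
    rw [map_sub, map_pow, hσβ, add_pow_char, one_pow]
    ring
  obtain ⟨k, hk⟩ := hfix _ hσa
  -- solve `c₀ ^ p - c₀ = k` in `K`, set `γ = β - c₀`; then `γ ^ p = γ`
  obtain ⟨c₀, hc₀⟩ := hAS k
  have hc₀' : c₀ ^ p - c₀ = k := hc₀
  set γ : L := β - algebraMap K L c₀ with hγ
  have hγp : γ ^ p = γ := by
    have h2 : (algebraMap K L c₀) ^ p - algebraMap K L c₀ = algebraMap K L k := by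
      rw [← map_pow, ← map_sub, hc₀']
    have h3 : γ ^ p - γ = 0 := by
      rw [hγ, sub_pow_char]
      have := hk
      linear_combination -h2 - hk
    exact sub_eq_zero.mp h3
  -- but `σ γ = γ + 1 ≠ γ`, so `γ` is not fixed, yet `γ` must be a cast `< p`
  have hσγ : σ γ = γ + 1 := by
    rw [hγ, map_sub, hσβ, AlgEquiv.commutes]
    ring
  have hfermat : ∀ i : ℕ, (i : L) ^ p = (i : L) := by
    intro i
    have h := congrArg (ZMod.castHom (dvd_refl p) L) (ZMod.pow_card (i : ZMod p))
    rw [map_pow, map_natCast] at h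
    exact h
  have hγK : ∃ i : ℕ, i < p ∧ (i : L) = γ := by
    by_contra hnot
    push_neg at hnot
    set f : Polynomial L := Polynomial.X ^ p - Polynomial.X with hf
    have hfdeg : f.natDegree = p := by
      rw [hf, Polynomial.natDegree_sub_eq_left_of_natDegree_lt, Polynomial.natDegree_X_pow]
      rw [Polynomial.natDegree_X, Polynomial.natDegree_X_pow]
      exact hp.one_lt
    have hfne : f ≠ 0 := by
      intro h
      rw [h, Polynomial.natDegree_zero] at hfdeg
      exact hp.pos.ne hfdeg
    have hroot : ∀ y : L, y ^ p = y → y ∈ f.roots := by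
      intro y hy
      rw [Polynomial.mem_roots hfne]
      simp [hf, Polynomial.IsRoot, hy]
    set m : Multiset L := γ ::ₘ (Multiset.range p).map (Nat.cast : ℕ → L) with hm
    have hnodup : m.Nodup := by
      rw [hm, Multiset.nodup_cons]
      constructor
      · intro hmem
        obtain ⟨i, hi, hival⟩ := Multiset.mem_map.mp hmem
        exact hnot i (Multiset.mem_range.mp hi) hival
      · refine Multiset.Nodup.map_on ?_ (Multiset.nodup_range p)
        intro a ha b hb hab
        exact CharP.natCast_injOn_Iio L p (Multiset.mem_range.mp ha)
          (Multiset.mem_range.mp hb) hab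
    have hsub : m ⊆ f.roots := by
      intro y hy
      rw [hm, Multiset.mem_cons] at hy
      rcases hy with h | h
      · subst h; exact hroot γ hγp
      · obtain ⟨i, hi, rfl⟩ := Multiset.mem_map.mp h
        exact hroot _ (hfermat i)
    have hle : m ≤ f.roots := (Multiset.le_iff_subset hnodup).mpr hsub
    have hcardm : Multiset.card m = p + 1 := by
      rw [hm]; simp
    have h4 : Multiset.card f.roots ≤ p := hfdeg ▸ f.card_roots'
    have := Multiset.card_le_card hle
    omega
  obtain ⟨i, hip, hi⟩ := hγK
  apply (one_ne_zero : (1 : L) ≠ 0)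
  have hfixγ : σ γ = γ := by rw [← hi, map_natCast]
  rw [hσγ] at hfixγ
  simp at hfixγ
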